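/- Let $\mu, \nu$ be probability measures on a measurable space $\mathcal{X}$ and let $\kappa, \eta : \mathcal{X} \rightsquigarrow \mathcal{Y}$ be finite kernels (with appropriate measurability of the Radon-Nikodym derivatives, e.g. $\mathcal{Y}$ has countably generated $\sigma$-algebra). Then the Kullback-Leibler divergence satisfies the chain rule $\mathrm{KL}(\mu \otimes_m \kappa, \nu \otimes_m \eta) = \mathrm{KL}(\mu, \nu) + \mathrm{KL}(\mu \otimes_m \kappa, \mu \otimes_m \eta)$, where $\kappa$ and $\eta$ are Markov kernels. -/

import Mathlib

open MeasureTheory ProbabilityTheory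
open scoped ENNReal Classical

/-- Kullback-Leibler divergence between two measures: `KL(μ, ν) = ∫ log (dμ/dν) dμ` (a value in
`ℝ≥0∞`) if `μ` is absolutely continuous with respect to `ν` (and the integral is well defined),
and `∞` otherwise. -/
noncomputable def klDiv {𝓧 : Type*} [MeasurableSpace 𝓧] (μ ν : Measure 𝓧) : ℝ≥0∞ :=
  if μ ≪ ν ∧ Integrable (fun x ↦ Real.log (μ.rnDeriv ν x).toReal) μ then
    ENNReal.ofReal (∫ x, Real.log (μ.rnDeriv ν x).toReal ∂μ)
  else ∞

section Aux

open Real Set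

variable {𝓧 𝓨 : Type*} [MeasurableSpace 𝓧] [MeasurableSpace 𝓨]

lemma my_compProd_withDensity (ν : Measure 𝓧) [SFinite ν] (η : Kernel 𝓧 𝓨) [IsSFiniteKernel η]
    {f : 𝓧 → ℝ≥0∞} (hf : Measurable f) :
    (ν.withDensity f) ⊗ₘ η = (ν ⊗ₘ η).withDensity (fun p ↦ f p.1) := by
  ext s hs
  rw [Measure.compProd_apply hs, withDensity_apply _ hs,
    lintegral_withDensity_eq_lintegral_mul _ hf (Kernel.measurable_kernel_prodMk_left hs),
    ← lintegral_indicator hs]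
  have hg : Measurable (s.indicator (fun p : 𝓧 × 𝓨 ↦ f p.1)) :=
    Measurable.indicator (hf.comp measurable_fst) hs
  rw [Measure.lintegral_compProd hg]
  congr 1
  ext x
  have : ∀ y, s.indicator (fun p : 𝓧 × 𝓨 ↦ f p.1) (x, y)
      = (Prod.mk x ⁻¹' s).indicator (fun _ ↦ f x) y := fun y ↦ rfl
  simp_rw [this]
  rw [lintegral_indicator (measurable_prodMk_left hs), setLIntegral_const]
  rfl

lemma my_ae_fst (μ : Measure 𝓧) [SFinite μ] (κ : Kernel 𝓧 𝓨) [IsMarkovKernel κ]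
    {p : 𝓧 → Prop} (h : ∀ᵐ x ∂μ, p x) : ∀ᵐ z ∂(μ ⊗ₘ κ), p z.1 := by
  have hmap : (μ ⊗ₘ κ).map Prod.fst = μ := by
    rw [← Measure.fst, Measure.fst_compProd]
  exact (MeasureTheory.Measure.tendsto_ae_map measurable_fst.aemeasurable).eventually (by rwa [hmap])

lemma my_ac_fst {μ ν : Measure 𝓧} [SFinite μ] [SFinite ν]
    {κ η : Kernel 𝓧 𝓨} [IsMarkovKernel κ] [IsMarkovKernel η]
    (h : (μ ⊗ₘ κ) ≪ (ν ⊗ₘ η)) : μ ≪ ν := by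
  have := h.map (measurable_fst (α := 𝓧) (β := 𝓨))
  rwa [← Measure.fst, ← Measure.fst, Measure.fst_compProd, Measure.fst_compProd] at this

lemma my_ac_right {μ ν : Measure 𝓧} [SFinite μ] [SFinite ν]
    {κ η : Kernel 𝓧 𝓨} [IsSFiniteKernel κ] [IsMarkovKernel η]
    (h : (μ ⊗ₘ κ) ≪ (ν ⊗ₘ η)) : (μ ⊗ₘ κ) ≪ (μ ⊗ₘ η) := by
  intro s hs0
  -- reduce to measurable superset
  obtain ⟨t, hst, ht, ht0⟩ := exists_measurable_superset_of_null hs0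
  refine measure_mono_null hst ?_
  rw [Measure.compProd_apply ht] at ht0
  have h_meas : Measurable fun x ↦ η x (Prod.mk x ⁻¹' t) :=
    Kernel.measurable_kernel_prodMk_left ht
  have hN : ∀ᵐ x ∂μ, η x (Prod.mk x ⁻¹' t) = 0 := by
    rwa [lintegral_eq_zero_iff h_meas] at ht0
  set N : Set 𝓧 := {x | η x (Prod.mk x ⁻¹' t) ≠ 0} with hN_def
  have hN_meas : MeasurableSet N := (h_meas (measurableSet_singleton 0)).compl
  have hμN : μ N = 0 := by
    have := ae_iff.mp hN
    simpa [hN_def] using this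
  have h_sub : t ⊆ (t ∩ (Nᶜ ×ˢ Set.univ)) ∪ (N ×ˢ Set.univ) := by
    intro z hz
    by_cases hzN : z.1 ∈ N
    · exact Or.inr ⟨hzN, Set.mem_univ _⟩
    · exact Or.inl ⟨hz, hzN, Set.mem_univ _⟩
  refine measure_mono_null h_sub (measure_union_null ?_ ?_)
  · refine h ?_
    rw [Measure.compProd_apply (ht.inter ((hN_meas.compl).prod MeasurableSet.univ))]
    refine lintegral_eq_zero_iff ?_ |>.mpr ?_
    · exact Kernel.measurable_kernel_prodMk_left
        (ht.inter ((hN_meas.compl).prod MeasurableSet.univ))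
    · refine Filter.Eventually.of_forall fun x ↦ ?_
      by_cases hxN : x ∈ N
      · have : Prod.mk x ⁻¹' (t ∩ (Nᶜ ×ˢ Set.univ)) = ∅ := by
          ext y; simp [hxN]
        simp [this]
      · have h0 : η x (Prod.mk x ⁻¹' t) = 0 := by simpa [hN_def] using hxN
        exact measure_mono_null (fun y hy ↦ hy.1) h0
  · rw [Measure.compProd_apply (hN_meas.prod MeasurableSet.univ)]
    refine lintegral_eq_zero_iff (Kernel.measurable_kernel_prodMk_left
      (hN_meas.prod MeasurableSet.univ)) |>.mpr ?_
    have : ∀ᵐ x ∂μ, x ∉ N := by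
      rw [ae_iff]; simpa using hμN
    filter_upwards [this] with x hx
    have h2 : Prod.mk x ⁻¹' (N ×ˢ (Set.univ : Set 𝓨)) = ∅ := by ext y; simp [hx]
    simp [h2]

lemma my_lintegral_inv_rnDeriv {μ ν : Measure 𝓧} [SigmaFinite μ] [SigmaFinite ν]
    (hμν : μ ≪ ν) :
    ∫⁻ x, (μ.rnDeriv ν x)⁻¹ ∂μ ≤ ν Set.univ := by
  have h1 : ∫⁻ x, (μ.rnDeriv ν x)⁻¹ ∂μ
      = ∫⁻ x, (μ.rnDeriv ν x)⁻¹ ∂(ν.withDensity (μ.rnDeriv ν)) := by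
    rw [Measure.withDensity_rnDeriv_eq μ ν hμν]
  rw [h1, lintegral_withDensity_eq_lintegral_mul _ (Measure.measurable_rnDeriv μ ν)
    (g := fun x ↦ (μ.rnDeriv ν x)⁻¹) (Measure.measurable_rnDeriv μ ν).inv]
  calc ∫⁻ x, (μ.rnDeriv ν * (μ.rnDeriv ν)⁻¹) x ∂ν
      ≤ ∫⁻ _, 1 ∂ν := lintegral_mono fun x ↦ ENNReal.mul_inv_le_one _
    _ = ν Set.univ := lintegral_one

lemma my_integrable_inv_rnDeriv {μ ν : Measure 𝓧} [IsFiniteMeasure μ] [IsProbabilityMeasure ν]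
    (hμν : μ ≪ ν) :
    Integrable (fun x ↦ ((μ.rnDeriv ν x)⁻¹).toReal) μ := by
  refine integrable_toReal_of_lintegral_ne_top
    (Measure.measurable_rnDeriv μ ν).inv.aemeasurable ?_
  refine ne_of_lt (lt_of_le_of_lt (my_lintegral_inv_rnDeriv hμν) ?_)
  simp

lemma my_integral_inv_rnDeriv_le_one {μ ν : Measure 𝓧} [IsFiniteMeasure μ]
    [IsProbabilityMeasure ν] (hμν : μ ≪ ν) :
    ∫ x, ((μ.rnDeriv ν x)⁻¹).toReal ∂μ ≤ 1 := by
  have h_fin : ∀ᵐ x ∂μ, (μ.rnDeriv ν x)⁻¹ < ∞ := by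
    filter_upwards [Measure.rnDeriv_pos hμν] with x hx
    exact ENNReal.inv_lt_top.mpr hx
  rw [integral_toReal (f := fun x ↦ (μ.rnDeriv ν x)⁻¹) (Measure.measurable_rnDeriv μ ν).inv.aemeasurable h_fin]
  have := my_lintegral_inv_rnDeriv hμν
  rw [measure_univ] at this
  simpa using ENNReal.toReal_mono ENNReal.one_ne_top this

lemma my_llr_bounds {μ ν : Measure 𝓧} [IsFiniteMeasure μ] [SigmaFinite ν] (hμν : μ ≪ ν) :
    ∀ᵐ x ∂μ, -llr μ ν x ≤ ((μ.rnDeriv ν x)⁻¹).toReal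
      ∧ 1 - ((μ.rnDeriv ν x)⁻¹).toReal ≤ llr μ ν x := by
  filter_upwards [Measure.rnDeriv_pos hμν, hμν.ae_le (Measure.rnDeriv_lt_top μ ν)]
    with x hx_pos hx_lt
  have hr : 0 < (μ.rnDeriv ν x).toReal := ENNReal.toReal_pos hx_pos.ne' hx_lt.ne
  have h_inv : ((μ.rnDeriv ν x)⁻¹).toReal = ((μ.rnDeriv ν x).toReal)⁻¹ := by
    rw [ENNReal.toReal_inv]
  have h_log := Real.log_le_sub_one_of_pos (inv_pos.mpr hr)
  rw [Real.log_inv] at h_log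
  constructor
  · rw [llr, h_inv]; linarith [inv_pos.mpr hr]
  · rw [llr, h_inv]; linarith

lemma my_integral_llr_nonneg {μ ν : Measure 𝓧} [IsProbabilityMeasure μ]
    [IsProbabilityMeasure ν] (hμν : μ ≪ ν) (h : Integrable (llr μ ν) μ) :
    0 ≤ ∫ x, llr μ ν x ∂μ := by
  have h_int := my_integrable_inv_rnDeriv hμν
  have h_le : ∫ x, (1 - ((μ.rnDeriv ν x)⁻¹).toReal) ∂μ ≤ ∫ x, llr μ ν x ∂μ := by
    refine integral_mono_ae ((integrable_const 1).sub h_int) h ?_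
    filter_upwards [my_llr_bounds hμν] with x hx using hx.2
  rw [integral_sub (integrable_const 1) h_int, integral_const] at h_le
  simp only [measure_univ, probReal_univ, ENNReal.toReal_one, smul_eq_mul, one_mul] at h_le
  linarith [my_integral_inv_rnDeriv_le_one hμν]

lemma my_integrable_pair {α : Type*} [MeasurableSpace α] {μ : Measure α} {u v φ ψ : α → ℝ}
    (hu : AEStronglyMeasurable u μ) (hv : AEStronglyMeasurable v μ)
    (hφ : Integrable φ μ) (hψ : Integrable ψ μ)
    (h1 : ∀ᵐ x ∂μ, -u x ≤ φ x) (h2 : ∀ᵐ x ∂μ, -v x ≤ ψ x)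
    (h : Integrable (fun x ↦ u x + v x) μ) : Integrable u μ ∧ Integrable v μ := by
  have hM : Integrable (fun x ↦ |u x + v x| + |ψ x| + |φ x|) μ := (h.abs.add hψ.abs).add hφ.abs
  constructor
  · refine hM.mono' hu ?_
    filter_upwards [h1, h2] with x hx1 hx2
    rw [Real.norm_eq_abs, abs_le]
    constructor
    · have := le_abs_self (φ x); have := le_abs_self (ψ x)
      have := abs_nonneg (u x + v x); have := abs_nonneg (ψ x)
      linarith
    · have := le_abs_self (u x + v x); have := le_abs_self (ψ x)
      have := abs_nonneg (φ x)
      linarith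
  · refine hM.mono' hv ?_
    filter_upwards [h1, h2] with x hx1 hx2
    rw [Real.norm_eq_abs, abs_le]
    constructor
    · have := le_abs_self (ψ x); have := le_abs_self (φ x)
      have := abs_nonneg (u x + v x); have := abs_nonneg (φ x)
      linarith
    · have := le_abs_self (u x + v x); have := le_abs_self (φ x)
      have := abs_nonneg (ψ x)
      linarith

lemma my_integrable_fst_iff {μ : Measure 𝓧} [SFinite μ] {κ : Kernel 𝓧 𝓨} [IsMarkovKernel κ]
    {g : 𝓧 → ℝ} (hg : AEStronglyMeasurable g μ) :
    Integrable (fun p : 𝓧 × 𝓨 ↦ g p.1) (μ ⊗ₘ κ) ↔ Integrable g μ := by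
  have hmap : (μ ⊗ₘ κ).map Prod.fst = μ := by
    rw [← Measure.fst, Measure.fst_compProd]
  have h := integrable_map_measure (f := Prod.fst) (g := g) (by rwa [hmap])
    measurable_fst.aemeasurable
  rw [hmap] at h
  exact h.symm

lemma my_integral_fst {μ : Measure 𝓧} [SFinite μ] {κ : Kernel 𝓧 𝓨} [IsMarkovKernel κ]
    {g : 𝓧 → ℝ} (hg : AEStronglyMeasurable g μ) :
    ∫ p, g p.1 ∂(μ ⊗ₘ κ) = ∫ x, g x ∂μ := by
  have hmap : (μ ⊗ₘ κ).map Prod.fst = μ := by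
    rw [← Measure.fst, Measure.fst_compProd]
  conv_rhs => rw [← hmap]
  exact (integral_map measurable_fst.aemeasurable (by rwa [hmap])).symm

lemma my_rnDeriv_chain {μ ν : Measure 𝓧} [IsProbabilityMeasure μ] [IsProbabilityMeasure ν]
    {κ η : Kernel 𝓧 𝓨} [IsMarkovKernel κ] [IsMarkovKernel η]
    (hμν : μ ≪ ν) (h2 : (μ ⊗ₘ κ) ≪ (μ ⊗ₘ η)) :
    (μ ⊗ₘ κ).rnDeriv (ν ⊗ₘ η)
      =ᵐ[μ ⊗ₘ κ] fun p ↦ (μ ⊗ₘ κ).rnDeriv (μ ⊗ₘ η) p * μ.rnDeriv ν p.1 := by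
  have hF : Measurable (fun p : 𝓧 × 𝓨 ↦ μ.rnDeriv ν p.1) :=
    (Measure.measurable_rnDeriv μ ν).comp measurable_fst
  have hwd : μ ⊗ₘ η = (ν ⊗ₘ η).withDensity (fun p ↦ μ.rnDeriv ν p.1) := by
    conv_lhs => rw [← Measure.withDensity_rnDeriv_eq μ ν hμν]
    exact my_compProd_withDensity ν η (Measure.measurable_rnDeriv μ ν)
  have h3 : (μ ⊗ₘ η).rnDeriv (ν ⊗ₘ η) =ᵐ[ν ⊗ₘ η] fun p ↦ μ.rnDeriv ν p.1 := by
    have := Measure.rnDeriv_withDensity (ν ⊗ₘ η) hF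
    rwa [← hwd] at this
  have h4 := Measure.rnDeriv_mul_rnDeriv (μ := μ ⊗ₘ κ) (ν := μ ⊗ₘ η) (κ := ν ⊗ₘ η) h2
  have hac : (μ ⊗ₘ κ) ≪ (ν ⊗ₘ η) :=
    h2.trans (Measure.AbsolutelyContinuous.compProd_left hμν η)
  filter_upwards [hac.ae_le h4, hac.ae_le h3] with p h4p h3p
  rw [← h4p, Pi.mul_apply, h3p]

lemma my_llr_decomp {μ ν : Measure 𝓧} [IsProbabilityMeasure μ] [IsProbabilityMeasure ν]
    {κ η : Kernel 𝓧 𝓨} [IsMarkovKernel κ] [IsMarkovKernel η]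
    (hμν : μ ≪ ν) (h2 : (μ ⊗ₘ κ) ≪ (μ ⊗ₘ η)) :
    llr (μ ⊗ₘ κ) (ν ⊗ₘ η)
      =ᵐ[μ ⊗ₘ κ] fun p ↦ llr μ ν p.1 + llr (μ ⊗ₘ κ) (μ ⊗ₘ η) p := by
  have hf : ∀ᵐ x ∂μ, 0 < μ.rnDeriv ν x ∧ μ.rnDeriv ν x < ∞ :=
    (Measure.rnDeriv_pos hμν).and (hμν.ae_le (Measure.rnDeriv_lt_top μ ν))
  filter_upwards [my_rnDeriv_chain hμν h2, Measure.rnDeriv_pos h2,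
    h2.ae_le (Measure.rnDeriv_lt_top (μ ⊗ₘ κ) (μ ⊗ₘ η)), my_ae_fst μ κ hf]
    with p hchain hg_pos hg_lt hf_p
  have hg_r : 0 < ((μ ⊗ₘ κ).rnDeriv (μ ⊗ₘ η) p).toReal := ENNReal.toReal_pos hg_pos.ne' hg_lt.ne
  have hf_r : 0 < (μ.rnDeriv ν p.1).toReal := ENNReal.toReal_pos hf_p.1.ne' hf_p.2.ne
  rw [llr, hchain, ENNReal.toReal_mul, Real.log_mul hg_r.ne' hf_r.ne']
  rw [llr, llr]
  ring

lemma my_klDiv_eq (μ ν : Measure 𝓧) :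
    klDiv μ ν = if μ ≪ ν ∧ Integrable (llr μ ν) μ then
      ENNReal.ofReal (∫ x, llr μ ν x ∂μ) else ∞ := rfl

end Aux

/-- **Chain rule for the Kullback-Leibler divergence.** For probability measures `μ, ν` on `𝓧`
and Markov kernels `κ, η : 𝓧 ↝ 𝓨` (with `𝓨` countably generated so that kernel Radon-Nikodym
derivatives are measurable), `KL(μ ⊗ₘ κ, ν ⊗ₘ η) = KL(μ, ν) + KL(μ ⊗ₘ κ, μ ⊗ₘ η)`. -/
theorem klDiv_compProd_chain_rule
    {𝓧 𝓨 : Type*} [MeasurableSpace 𝓧] [MeasurableSpace 𝓨]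
    [MeasurableSpace.CountablyGenerated 𝓨]
    (μ ν : Measure 𝓧) [IsProbabilityMeasure μ] [IsProbabilityMeasure ν]
    (κ η : Kernel 𝓧 𝓨) [IsMarkovKernel κ] [IsMarkovKernel η] :
    klDiv (μ ⊗ₘ κ) (ν ⊗ₘ η) = klDiv μ ν + klDiv (μ ⊗ₘ κ) (μ ⊗ₘ η) := by
  rw [my_klDiv_eq, my_klDiv_eq, my_klDiv_eq]
  by_cases hac : (μ ⊗ₘ κ) ≪ (ν ⊗ₘ η)
  · have h1 : μ ≪ ν := my_ac_fst hac
    have h2 : (μ ⊗ₘ κ) ≪ (μ ⊗ₘ η) := my_ac_right hac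
    set u : 𝓧 × 𝓨 → ℝ := fun p ↦ llr μ ν p.1 with hu_def
    set v : 𝓧 × 𝓨 → ℝ := llr (μ ⊗ₘ κ) (μ ⊗ₘ η) with hv_def
    have hdecomp : llr (μ ⊗ₘ κ) (ν ⊗ₘ η) =ᵐ[μ ⊗ₘ κ] fun p ↦ u p + v p :=
      my_llr_decomp h1 h2
    have hu_meas : AEStronglyMeasurable u (μ ⊗ₘ κ) :=
      ((measurable_llr μ ν).comp measurable_fst).aestronglyMeasurable
    have hv_meas : AEStronglyMeasurable v (μ ⊗ₘ κ) :=
      (measurable_llr _ _).aestronglyMeasurable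
    have hφ : Integrable (fun p : 𝓧 × 𝓨 ↦ ((μ.rnDeriv ν p.1)⁻¹).toReal) (μ ⊗ₘ κ) :=
      (my_integrable_fst_iff (my_integrable_inv_rnDeriv h1).aestronglyMeasurable).mpr
        (my_integrable_inv_rnDeriv h1)
    have hψ : Integrable (fun p ↦ (((μ ⊗ₘ κ).rnDeriv (μ ⊗ₘ η) p)⁻¹).toReal) (μ ⊗ₘ κ) :=
      my_integrable_inv_rnDeriv h2
    have h1b : ∀ᵐ p ∂(μ ⊗ₘ κ), -u p ≤ ((μ.rnDeriv ν p.1)⁻¹).toReal := by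
      filter_upwards [my_ae_fst μ κ (my_llr_bounds h1)] with p hp using hp.1
    have h2b : ∀ᵐ p ∂(μ ⊗ₘ κ), -v p ≤ (((μ ⊗ₘ κ).rnDeriv (μ ⊗ₘ η) p)⁻¹).toReal := by
      filter_upwards [my_llr_bounds h2] with p hp using hp.1
    by_cases hint : Integrable (llr (μ ⊗ₘ κ) (ν ⊗ₘ η)) (μ ⊗ₘ κ)
    · obtain ⟨hu_int, hv_int⟩ := my_integrable_pair hu_meas hv_meas hφ hψ h1b h2b
        ((integrable_congr hdecomp).mp hint)
      have hu_int' : Integrable (llr μ ν) μ :=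
        (my_integrable_fst_iff (stronglyMeasurable_llr μ ν).aestronglyMeasurable).mp hu_int
      rw [if_pos ⟨hac, hint⟩, if_pos ⟨h1, hu_int'⟩, if_pos ⟨h2, hv_int⟩]
      rw [integral_congr_ae hdecomp, integral_add hu_int hv_int]
      rw [show ∫ p, u p ∂(μ ⊗ₘ κ) = ∫ x, llr μ ν x ∂μ from
        my_integral_fst (stronglyMeasurable_llr μ ν).aestronglyMeasurable]
      rw [ENNReal.ofReal_add (my_integral_llr_nonneg h1 hu_int')
        (my_integral_llr_nonneg h2 hv_int)]
    · rw [if_neg (fun h ↦ hint h.2)]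
      have : ¬ (Integrable (llr μ ν) μ ∧ Integrable v (μ ⊗ₘ κ)) := by
        rintro ⟨ha, hb⟩
        have hu_int : Integrable u (μ ⊗ₘ κ) :=
          (my_integrable_fst_iff (stronglyMeasurable_llr μ ν).aestronglyMeasurable).mpr ha
        exact hint ((integrable_congr hdecomp).mpr (hu_int.add hb))
      rcases not_and_or.mp this with h | h
      · have hneg : ¬ (μ ≪ ν ∧ Integrable (llr μ ν) μ) := fun hh ↦ h hh.2
        rw [if_neg hneg]
        simp
      · have hneg : ¬ ((μ ⊗ₘ κ) ≪ (μ ⊗ₘ η) ∧ Integrable (llr (μ ⊗ₘ κ) (μ ⊗ₘ η)) (μ ⊗ₘ κ)) :=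
          fun hh ↦ h hh.2
        rw [if_neg hneg]
        simp
  · rw [if_neg (fun h ↦ hac h.1)]
    have : ¬ (μ ≪ ν) ∨ ¬ ((μ ⊗ₘ κ) ≪ (μ ⊗ₘ η)) := by
      by_contra h
      push_neg at h
      exact hac (h.2.trans (Measure.AbsolutelyContinuous.compProd_left h.1 η))
    rcases this with h | h
    · have hneg : ¬ (μ ≪ ν ∧ Integrable (llr μ ν) μ) := fun hh ↦ h hh.1
      rw [if_neg hneg]
      simp
    · have hneg : ¬ ((μ ⊗ₘ κ) ≪ (μ ⊗ₘ η) ∧ Integrable (llr (μ ⊗ₘ κ) (μ ⊗ₘ η)) (μ ⊗ₘ κ)) :=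
        fun hh ↦ h hh.1
      rw [if_neg hneg]
      simp
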